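/- For a separable Hilbert space H, the family of exponential vectors {φ_f : f ∈ H} is linearly independent in the Fock space Γ(H): if f_1, …, f_m ∈ H are distinct and Σ c_k φ_{f_k} = 0 with scalars c_k, then all c_k = 0. -/

import Mathlib

open scoped InnerProductSpace in
/-- There exists a vector separating finitely many distinct vectors via inner products. -/
lemma exists_separating {H : Type*} [NormedAddCommGroup H] [InnerProductSpace ℂ H]
    {m : ℕ} (f : Fin m → H) (hf : Function.Injective f) :
    ∃ g : H, Function.Injective (fun k => ⟪g, f k⟫_ℂ) := by
  classical
  set ι := {p : Fin m × Fin m // p.1 ≠ p.2}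
  have : Finite ι := Subtype.finite
  by_contra hcon
  push_neg at hcon
  have hcover : ⋃ p : ι, ((LinearMap.ker (innerSL ℂ (f p.1.1 - f p.1.2) : H →ₗ[ℂ] ℂ) : Submodule ℂ H)
      : Set H) = Set.univ := by
    ext g
    simp only [Set.mem_iUnion, Set.mem_univ, iff_true]
    obtain ⟨k, l, hkl, hne⟩ := Function.not_injective_iff.mp (hcon g)
    refine ⟨⟨(k, l), hne⟩, ?_⟩
    simp only [SetLike.mem_coe, LinearMap.mem_ker, ContinuousLinearMap.coe_coe, innerSL_apply_apply, inner_sub_left]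
    rw [sub_eq_zero, ← inner_conj_symm (f k) g, ← inner_conj_symm (f l) g]
    exact congrArg _ hkl
  obtain ⟨p, hp⟩ := Subspace.exists_eq_top_of_iUnion_eq_univ hcover
  have hne : f p.1.1 - f p.1.2 ≠ 0 := sub_ne_zero.mpr (fun h => p.2 (hf h))
  have : f p.1.1 - f p.1.2 ∈ LinearMap.ker (innerSL ℂ (f p.1.1 - f p.1.2) : H →ₗ[ℂ] ℂ) := by
    rw [hp]; trivial
  rw [LinearMap.mem_ker, ContinuousLinearMap.coe_coe, innerSL_apply_apply, inner_self_eq_zero] at this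
  exact hne this

/-- Exponential functions with distinct exponents are linearly independent:
moment identities from differentiating at 0. -/
lemma exp_moments {m : ℕ} (b : Fin m → ℂ) (c : Fin m → ℂ)
    (h : ∀ s : ℂ, ∑ k, c k * Complex.exp (s * b k) = 0) :
    ∀ n : ℕ, ∑ k, c k * b k ^ n = 0 := by
  have key : ∀ n : ℕ, ∀ s : ℂ, ∑ k, c k * b k ^ n * Complex.exp (s * b k) = 0 := by
    intro n
    induction n with
    | zero => simpa using h
    | succ n ih =>
      intro s
      have hd : ∀ s : ℂ, HasDerivAt (fun t => ∑ k, c k * b k ^ n * Complex.exp (t * b k))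
          (∑ k, c k * b k ^ (n + 1) * Complex.exp (s * b k)) s := by
        intro s
        refine HasDerivAt.fun_sum fun k _ => ?_
        have h1 : HasDerivAt (fun t : ℂ => t * b k) (b k) s := hasDerivAt_mul_const (b k)
        have h2 : HasDerivAt (fun t : ℂ => Complex.exp (t * b k))
            (Complex.exp (s * b k) * b k) s := by
          exact (Complex.hasDerivAt_exp (s * b k)).comp s h1
        have := h2.const_mul (c k * b k ^ n)
        convert this using 1
        · rfl
        ring
      have hfun : (fun t => ∑ k, c k * b k ^ n * Complex.exp (t * b k)) = fun _ => (0 : ℂ) :=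
        funext ih
      have := (hd s).deriv
      rw [hfun] at this
      simpa [deriv_const] using this.symm
  intro n
  simpa using key n 0

lemma exp_lin_indep {m : ℕ} (b : Fin m → ℂ) (hb : Function.Injective b) (c : Fin m → ℂ)
    (h : ∀ s : ℂ, ∑ k, c k * Complex.exp (s * b k) = 0) : ∀ k, c k = 0 := by
  have hmom := exp_moments b c h
  have hdet : (Matrix.vandermonde b).det ≠ 0 := by
    rw [Matrix.det_vandermonde]
    refine Finset.prod_ne_zero_iff.mpr fun i _ => Finset.prod_ne_zero_iff.mpr fun j hj => ?_
    rw [Finset.mem_Ioi] at hj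
    exact sub_ne_zero.mpr fun hbe => hj.ne' (hb hbe)
  have hmul : ((Matrix.vandermonde b).transpose).mulVec c = 0 := by
    funext n
    simpa [Matrix.mulVec, dotProduct, Matrix.vandermonde, mul_comm] using hmom n
  have := Matrix.eq_zero_of_mulVec_eq_zero (by rwa [Matrix.det_transpose]) hmul
  exact fun k => congrFun this k

/- Linear independence of the exponential vectors {φ_f : f ∈ H} in the Fock
space Γ(H).  The Fock space is modelled as a Hilbert space `F` together with
the exponential-vector map `expVec : H → F` characterized by
⟪φ_f, φ_g⟫ = exp ⟪f, g⟫. -/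
open scoped InnerProductSpace

theorem stmt_1 {H F : Type*} [NormedAddCommGroup H] [InnerProductSpace ℂ H]
    [CompleteSpace H] [TopologicalSpace.SeparableSpace H]
    [NormedAddCommGroup F] [InnerProductSpace ℂ F] [CompleteSpace F]
    (expVec : H → F)
    (hexp : ∀ f g : H, ⟪expVec f, expVec g⟫_ℂ = Complex.exp ⟪f, g⟫_ℂ)
    (m : ℕ) (f : Fin m → H) (hf : Function.Injective f)
    (c : Fin m → ℂ) (hc : ∑ k, c k • expVec (f k) = 0) :
    ∀ k, c k = 0 := by
  obtain ⟨g, hg⟩ := exists_separating f hf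
  set b : Fin m → ℂ := fun k => ⟪g, f k⟫_ℂ with hb
  have key : ∀ s : ℂ, ∑ k, c k * Complex.exp (s * b k) = 0 := by
    intro s
    have h0 : ⟪expVec ((starRingEnd ℂ s) • g), ∑ k, c k • expVec (f k)⟫_ℂ = 0 := by
      rw [hc, inner_zero_right]
    rw [inner_sum] at h0
    simp only [inner_smul_right, hexp, inner_smul_left, RingHom.id_apply,
      Complex.conj_conj] at h0
    simpa [mul_comm] using h0
  exact exp_lin_indep b hg c key
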